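/- In a normed algebra (or for N×N matrices), the Lie product formula holds: lim_{n→∞} (exp(X/n)·exp(Y/n))ⁿ = exp(X + Y). -/

import Mathlib

open NormedSpace Filter

section Aux

variable {𝔸 : Type*} [NormedRing 𝔸] [NormedAlgebra ℝ 𝔸] [CompleteSpace 𝔸] [NormOneClass 𝔸]

lemma aux_term_bound (u : 𝔸) (n : ℕ) :
    ‖((Nat.factorial n : ℝ)⁻¹) • u ^ n‖ ≤ ‖u‖ ^ n / (Nat.factorial n : ℝ) := by
  rw [norm_smul, Real.norm_eq_abs, abs_inv, Nat.abs_cast, inv_mul_eq_div]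
  exact div_le_div_of_nonneg_right (norm_pow_le u n) (by positivity)

lemma aux_real_hasSum (r : ℝ) : HasSum (fun n : ℕ => r ^ n / (Nat.factorial n : ℝ)) (Real.exp r) := by
  rw [Real.exp_eq_exp_ℝ]
  exact expSeries_div_hasSum_exp r

/-- `‖exp u‖ ≤ exp ‖u‖` when `‖1‖ = 1`. -/
lemma aux_norm_exp_le (u : 𝔸) : ‖exp u‖ ≤ Real.exp ‖u‖ := by
  calc ‖exp u‖ = ‖∑' n : ℕ, ((Nat.factorial n : ℝ)⁻¹) • u ^ n‖ := by rw [exp_eq_tsum ℝ]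
    _ ≤ ∑' n : ℕ, ‖((Nat.factorial n : ℝ)⁻¹) • u ^ n‖ :=
        norm_tsum_le_tsum_norm (norm_expSeries_summable' u)
    _ ≤ ∑' n : ℕ, ‖u‖ ^ n / (Nat.factorial n : ℝ) :=
        Summable.tsum_le_tsum (aux_term_bound u) (norm_expSeries_summable' u)
          (aux_real_hasSum ‖u‖).summable
    _ = Real.exp ‖u‖ := (aux_real_hasSum ‖u‖).tsum_eq

end Aux

section Aux2

set_option linter.unusedSectionVars false

variable {𝔸 : Type*} [NormedRing 𝔸] [NormedAlgebra ℝ 𝔸] [CompleteSpace 𝔸] [NormOneClass 𝔸]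

/-- Second-order remainder bound for `exp`. -/
lemma aux_norm_exp_sub_one_sub_le (u : 𝔸) :
    ‖exp u - 1 - u‖ ≤ ‖u‖ ^ 2 * Real.exp ‖u‖ := by
  set f : ℕ → 𝔸 := fun n => ((Nat.factorial n : ℝ)⁻¹) • u ^ n with hf
  have h1 : HasSum f (exp u) := exp_series_hasSum_exp' u
  have h2 : HasSum (fun n => f (n + 2)) (exp u - 1 - u) := by
    refine (hasSum_nat_add_iff 2).mpr ?_
    convert h1 using 1
    · rfl
    have : ∑ i ∈ Finset.range 2, f i = 1 + u := by
      simp [hf, Finset.sum_range_succ, Nat.factorial]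
    rw [this]
    abel
  have hb : ∀ n : ℕ, ‖f (n + 2)‖ ≤ ‖u‖ ^ 2 * (‖u‖ ^ n / (Nat.factorial n : ℝ)) := by
    intro n
    calc ‖f (n + 2)‖ ≤ ‖u‖ ^ (n + 2) / (Nat.factorial (n + 2) : ℝ) := aux_term_bound u (n + 2)
      _ ≤ ‖u‖ ^ (n + 2) / (Nat.factorial n : ℝ) := by
          apply div_le_div_of_nonneg_left (by positivity) (by positivity)
          exact_mod_cast Nat.factorial_le (by omega)
      _ = ‖u‖ ^ 2 * (‖u‖ ^ n / (Nat.factorial n : ℝ)) := by ring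
  have hg : HasSum (fun n : ℕ => ‖u‖ ^ 2 * (‖u‖ ^ n / (Nat.factorial n : ℝ)))
      (‖u‖ ^ 2 * Real.exp ‖u‖) := (aux_real_hasSum ‖u‖).mul_left _
  calc ‖exp u - 1 - u‖ = ‖∑' n, f (n + 2)‖ := by rw [h2.tsum_eq]
    _ ≤ ∑' n, ‖f (n + 2)‖ := norm_tsum_le_tsum_norm
        (((norm_expSeries_summable' u).comp_injective (add_left_injective 2)))
    _ ≤ ∑' n : ℕ, ‖u‖ ^ 2 * (‖u‖ ^ n / (Nat.factorial n : ℝ)) :=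
        Summable.tsum_le_tsum hb (((norm_expSeries_summable' u).comp_injective (add_left_injective 2)))
          hg.summable
    _ = ‖u‖ ^ 2 * Real.exp ‖u‖ := hg.tsum_eq

/-- Telescoping power bound. -/
lemma aux_pow_sub_pow (a b : 𝔸) (M : ℝ) (ha : ‖a‖ ≤ M) (hb : ‖b‖ ≤ M) :
    ∀ n : ℕ, ‖a ^ (n + 1) - b ^ (n + 1)‖ ≤ (n + 1) * M ^ n * ‖a - b‖ := by
  intro n
  induction n with
  | zero => simp
  | succ n ih =>
    have hM : 0 ≤ M := le_trans (norm_nonneg a) ha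
    have key : a ^ (n + 2) - b ^ (n + 2)
        = a ^ (n + 1) * (a - b) + (a ^ (n + 1) - b ^ (n + 1)) * b := by
      rw [pow_succ, pow_succ]
      noncomm_ring
    calc ‖a ^ (n + 2) - b ^ (n + 2)‖
        ≤ ‖a ^ (n + 1) * (a - b)‖ + ‖(a ^ (n + 1) - b ^ (n + 1)) * b‖ := by
          rw [key]; exact norm_add_le _ _
      _ ≤ ‖a‖ ^ (n + 1) * ‖a - b‖ + ((n + 1) * M ^ n * ‖a - b‖) * ‖b‖ := by
          gcongr
          · exact (norm_mul_le _ _).trans (by gcongr; exact norm_pow_le a (n + 1))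
          · exact (norm_mul_le _ _).trans (by gcongr)
      _ ≤ M ^ (n + 1) * ‖a - b‖ + ((n + 1) * M ^ n * ‖a - b‖) * M := by gcongr
      _ = ((n : ℝ) + 1 + 1) * M ^ (n + 1) * ‖a - b‖ := by ring
      _ = ((n + 1 : ℕ) + 1) * M ^ (n + 1) * ‖a - b‖ := by norm_cast

end Aux2

/-- The Trotter formula in a Banach algebra with `‖1‖ = 1`. -/
theorem lie_core {𝔸 : Type*} [NormedRing 𝔸] [NormedAlgebra ℝ 𝔸]
    [CompleteSpace 𝔸] [NormOneClass 𝔸] (X Y : 𝔸) :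
    Tendsto (fun n : ℕ =>
        (exp ((n : ℝ)⁻¹ • X) * exp ((n : ℝ)⁻¹ • Y)) ^ n)
      atTop (nhds (exp (X + Y))) := by
  set t : ℝ := ‖X‖ + ‖Y‖ with htdef
  have ht : 0 ≤ t := by positivity
  set C : ℝ := 4 * t ^ 2 * Real.exp t * Real.exp t with hCdef
  have key : ∀ n : ℕ, 1 ≤ n →
      ‖(exp ((n : ℝ)⁻¹ • X) * exp ((n : ℝ)⁻¹ • Y)) ^ n - exp (X + Y)‖ ≤ C / n := by
    intro n hn
    have hnR : (0 : ℝ) < n := by exact_mod_cast hn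
    set c : ℝ := ((n : ℝ))⁻¹ with hcdef
    set u : 𝔸 := c • X with hudef
    set v : 𝔸 := c • Y with hvdef
    set r : ℝ := t / n with hrdef
    have hr0 : 0 ≤ r := by positivity
    have hrt : r ≤ t := by
      rw [hrdef, div_le_iff₀ hnR]
      nlinarith [ht, hnR, (by exact_mod_cast hn : (1:ℝ) ≤ n)]
    have hsum : ‖u‖ + ‖v‖ = r := by
      rw [hudef, hvdef, norm_smul, norm_smul, hcdef, Real.norm_eq_abs, abs_inv, Nat.abs_cast,
        hrdef, htdef]
      field_simp
    have hpu : ‖u‖ ≤ r := by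
      rw [← hsum]; exact le_add_of_nonneg_right (norm_nonneg _)
    have hpv : ‖v‖ ≤ r := by
      rw [← hsum]; exact le_add_of_nonneg_left (norm_nonneg _)
    have huv : ‖u + v‖ ≤ r := by
      rw [← hsum]; exact norm_add_le _ _
    -- norms of the exponentials
    have hea : ‖exp u * exp v‖ ≤ Real.exp r := by
      calc ‖exp u * exp v‖ ≤ ‖exp u‖ * ‖exp v‖ := norm_mul_le _ _
        _ ≤ Real.exp ‖u‖ * Real.exp ‖v‖ := by
            gcongr <;> [exact aux_norm_exp_le u; exact aux_norm_exp_le v]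
        _ = Real.exp (‖u‖ + ‖v‖) := (Real.exp_add _ _).symm
        _ = Real.exp r := by rw [hsum]
    have heb : ‖exp (u + v)‖ ≤ Real.exp r :=
      (aux_norm_exp_le _).trans (Real.exp_le_exp.mpr huv)
    -- the second-order difference bound
    have hdiff : ‖exp u * exp v - exp (u + v)‖ ≤ 4 * r ^ 2 * Real.exp r := by
      have hid : exp u * exp v - exp (u + v)
          = (exp u - 1 - u) * exp v + (1 + u) * (exp v - 1 - v) + u * v
            - (exp (u + v) - 1 - (u + v)) := by noncomm_ring
      have h1 : ‖(exp u - 1 - u) * exp v‖ ≤ r ^ 2 * Real.exp r := by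
        calc ‖(exp u - 1 - u) * exp v‖ ≤ ‖exp u - 1 - u‖ * ‖exp v‖ := norm_mul_le _ _
          _ ≤ (‖u‖ ^ 2 * Real.exp ‖u‖) * Real.exp ‖v‖ := by
              gcongr <;> [exact aux_norm_exp_sub_one_sub_le u; exact aux_norm_exp_le v]
          _ = ‖u‖ ^ 2 * Real.exp (‖u‖ + ‖v‖) := by rw [Real.exp_add]; ring
          _ ≤ r ^ 2 * Real.exp r := by rw [hsum]; gcongr
      have h2 : ‖(1 + u) * (exp v - 1 - v)‖ ≤ r ^ 2 * Real.exp r := by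
        calc ‖(1 + u) * (exp v - 1 - v)‖ ≤ ‖(1 : 𝔸) + u‖ * ‖exp v - 1 - v‖ := norm_mul_le _ _
          _ ≤ (1 + ‖u‖) * (‖v‖ ^ 2 * Real.exp ‖v‖) := by
              gcongr
              · exact (norm_add_le _ _).trans (by rw [norm_one])
              · exact aux_norm_exp_sub_one_sub_le v
          _ ≤ Real.exp ‖u‖ * (‖v‖ ^ 2 * Real.exp ‖v‖) := by
              have h := Real.add_one_le_exp ‖u‖
              gcongr
              linarith
          _ = ‖v‖ ^ 2 * Real.exp (‖u‖ + ‖v‖) := by rw [Real.exp_add]; ring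
          _ ≤ r ^ 2 * Real.exp r := by rw [hsum]; gcongr
      have h3 : ‖u * v‖ ≤ r ^ 2 * Real.exp r := by
        calc ‖u * v‖ ≤ ‖u‖ * ‖v‖ := norm_mul_le _ _
          _ ≤ r * r := by gcongr
          _ = r ^ 2 * 1 := by ring
          _ ≤ r ^ 2 * Real.exp r := by gcongr; exact Real.one_le_exp hr0
      have h4 : ‖exp (u + v) - 1 - (u + v)‖ ≤ r ^ 2 * Real.exp r := by
        calc ‖exp (u + v) - 1 - (u + v)‖ ≤ ‖u + v‖ ^ 2 * Real.exp ‖u + v‖ :=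
              aux_norm_exp_sub_one_sub_le _
          _ ≤ r ^ 2 * Real.exp r := by gcongr
      calc ‖exp u * exp v - exp (u + v)‖
          ≤ ‖(exp u - 1 - u) * exp v + (1 + u) * (exp v - 1 - v) + u * v‖
            + ‖exp (u + v) - 1 - (u + v)‖ := by rw [hid]; exact norm_sub_le _ _
        _ ≤ ‖(exp u - 1 - u) * exp v + (1 + u) * (exp v - 1 - v)‖ + ‖u * v‖
            + ‖exp (u + v) - 1 - (u + v)‖ := by gcongr; exact norm_add_le _ _
        _ ≤ ‖(exp u - 1 - u) * exp v‖ + ‖(1 + u) * (exp v - 1 - v)‖ + ‖u * v‖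
            + ‖exp (u + v) - 1 - (u + v)‖ := by gcongr; exact norm_add_le _ _
        _ ≤ r ^ 2 * Real.exp r + r ^ 2 * Real.exp r + r ^ 2 * Real.exp r
            + r ^ 2 * Real.exp r := by gcongr
        _ = 4 * r ^ 2 * Real.exp r := by ring
    -- exact power of the comparison term
    have hbpow : exp (u + v) ^ n = exp (X + Y) := by
      let +nondep : NormedAlgebra ℚ 𝔸 := .restrictScalars ℚ ℝ 𝔸
      rw [← exp_nsmul]
      congr 1
      rw [hudef, hvdef, ← smul_add, ← Nat.cast_smul_eq_nsmul ℝ, smul_smul, hcdef,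
        mul_inv_cancel₀ (ne_of_gt hnR), one_smul]
    -- telescoping
    obtain ⟨m, rfl⟩ : ∃ m, n = m + 1 := ⟨n - 1, by omega⟩
    have hpow := aux_pow_sub_pow (exp u * exp v) (exp (u + v)) (Real.exp r) hea heb m
    have hEm : Real.exp r ^ m ≤ Real.exp t := by
      rw [← Real.exp_nat_mul]
      apply Real.exp_le_exp.mpr
      rw [hrdef, mul_div_assoc']
      rw [div_le_iff₀ hnR]
      push_cast
      nlinarith [ht, Nat.cast_nonneg (α := ℝ) m]
    calc ‖(exp u * exp v) ^ (m + 1) - exp (X + Y)‖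
        = ‖(exp u * exp v) ^ (m + 1) - exp (u + v) ^ (m + 1)‖ := by rw [hbpow]
      _ ≤ (m + 1) * Real.exp r ^ m * ‖exp u * exp v - exp (u + v)‖ := hpow
      _ ≤ (m + 1) * Real.exp t * (4 * r ^ 2 * Real.exp t) := by
          gcongr
          exact hdiff.trans (by gcongr)
      _ = C / (m + 1 : ℕ) := by
          rw [hCdef, hrdef]
          push_cast
          field_simp
  rw [tendsto_iff_norm_sub_tendsto_zero]
  apply squeeze_zero' (Eventually.of_forall fun n => norm_nonneg _)
  · filter_upwards [eventually_ge_atTop 1] with n hn using key n hn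
  · exact tendsto_const_div_atTop_nhds_zero_nat C

/-- The Lie product (Trotter) formula in a Banach algebra:
`(exp(X/n)·exp(Y/n))ⁿ → exp(X + Y)`. -/
theorem lie_product_formula {𝔸 : Type*} [NormedRing 𝔸] [NormedAlgebra ℝ 𝔸]
    [CompleteSpace 𝔸] (X Y : 𝔸) :
    Tendsto (fun n : ℕ =>
        (exp ((n : ℝ)⁻¹ • X) * exp ((n : ℝ)⁻¹ • Y)) ^ n)
      atTop (nhds (exp (X + Y))) := by
  rcases subsingleton_or_nontrivial 𝔸 with hsub | hnt
  · exact tendsto_const_nhds.congr fun n => Subsingleton.elim _ _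
  · -- pass to the left regular representation, where `‖1‖ = 1`
    let L : 𝔸 →+* (𝔸 →L[ℝ] 𝔸) :=
      { toFun := fun a => ContinuousLinearMap.mul ℝ 𝔸 a
        map_one' := by ext x; simp
        map_mul' := fun a b => by ext x; simp [mul_assoc]
        map_zero' := by ext x; simp
        map_add' := fun a b => by ext x; simp [add_mul] }
    let +nondep : NormedAlgebra ℚ 𝔸 := .restrictScalars ℚ ℝ 𝔸
    let +nondep : NormedAlgebra ℚ (𝔸 →L[ℝ] 𝔸) := .restrictScalars ℚ ℝ (𝔸 →L[ℝ] 𝔸)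
    have hL : Continuous L := (ContinuousLinearMap.mul ℝ 𝔸).continuous
    have hmain := lie_core (L X) (L Y)
    have hsm : ∀ (n : ℕ) (a : 𝔸), (n : ℝ)⁻¹ • L a = L ((n : ℝ)⁻¹ • a) := fun n a =>
      (map_smul (ContinuousLinearMap.mul ℝ 𝔸) _ a).symm
    have heq : (fun n : ℕ => (exp ((n : ℝ)⁻¹ • L X) * exp ((n : ℝ)⁻¹ • L Y)) ^ n)
        = fun n : ℕ => L ((exp ((n : ℝ)⁻¹ • X) * exp ((n : ℝ)⁻¹ • Y)) ^ n) := by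
      funext n
      rw [hsm, hsm, ← map_exp L hL, ← map_exp L hL, ← map_mul, ← map_pow]
    rw [heq, ← map_add, ← map_exp L hL] at hmain
    have hev := ((ContinuousLinearMap.apply ℝ 𝔸 (1 : 𝔸)).continuous.tendsto _).comp hmain
    have hpt : (ContinuousLinearMap.apply ℝ 𝔸 (1 : 𝔸)) (L (exp (X + Y))) = exp (X + Y) := by
      simp [L]
    rw [hpt] at hev
    refine hev.congr fun n => ?_
    simp [L, Function.comp]
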